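/- The log-sum-exp function lse(x) = log(Σ_{i∈[n]} exp(x_i)) is 1-smooth in the ℓ∞ norm: for all x, u ∈ ℝ^n, 0 ≤ uᵀ∇²lse(x)u ≤ ‖u‖∞². -/

import Mathlib

namespace Stmt6Aux

variable {n : ℕ}

noncomputable def S (y : Fin n → ℝ) : ℝ := ∑ i, Real.exp (y i)

noncomputable def T (y : Fin n → ℝ) : (Fin n → ℝ) →L[ℝ] ℝ :=
  ∑ i, Real.exp (y i) • ContinuousLinearMap.proj i

noncomputable def T' (y : Fin n → ℝ) : (Fin n → ℝ) →L[ℝ] ((Fin n → ℝ) →L[ℝ] ℝ) :=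
  ∑ i, (Real.exp (y i) • ContinuousLinearMap.proj i).smulRight
    (ContinuousLinearMap.proj (R := ℝ) (φ := fun _ : Fin n => ℝ) i)

noncomputable def f' (y : Fin n → ℝ) : (Fin n → ℝ) →L[ℝ] ℝ := (S y)⁻¹ • T y

noncomputable def B (y : Fin n → ℝ) : (Fin n → ℝ) →L[ℝ] ((Fin n → ℝ) →L[ℝ] ℝ) :=
  (S y)⁻¹ • T' y + (-(S y ^ 2)⁻¹ • T y).smulRight (T y)

lemma T_apply (y v : Fin n → ℝ) : T y v = ∑ i, Real.exp (y i) * v i := by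
  simp [T]

lemma hS_pos (hn : 0 < n) (y : Fin n → ℝ) : 0 < S y :=
  Finset.sum_pos (fun i _ => Real.exp_pos _) ⟨⟨0, hn⟩, Finset.mem_univ _⟩

lemma hasFDerivAt_S (y : Fin n → ℝ) : HasFDerivAt S (T y) y :=
  HasFDerivAt.fun_sum fun i _ =>
    (Real.hasDerivAt_exp (y i)).comp_hasFDerivAt (f := fun z : Fin n → ℝ => z i) y (hasFDerivAt_apply i y)

lemma hasFDerivAt_lse (hn : 0 < n) (y : Fin n → ℝ) :
    HasFDerivAt (fun z : Fin n → ℝ => Real.log (∑ i, Real.exp (z i))) (f' y) y :=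
  (Real.hasDerivAt_log (hS_pos hn y).ne').comp_hasFDerivAt y (hasFDerivAt_S y)

lemma hasFDerivAt_T (y : Fin n → ℝ) : HasFDerivAt T (T' y) y :=
  HasFDerivAt.fun_sum fun i _ =>
    ((Real.hasDerivAt_exp (y i)).comp_hasFDerivAt (f := fun z : Fin n → ℝ => z i) y (hasFDerivAt_apply i y)).smul_const
      (ContinuousLinearMap.proj (R := ℝ) (φ := fun _ : Fin n => ℝ) i)

lemma hasFDerivAt_Sinv (hn : 0 < n) (y : Fin n → ℝ) :
    HasFDerivAt (fun z : Fin n → ℝ => (S z)⁻¹) (-(S y ^ 2)⁻¹ • T y) y :=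
  (hasDerivAt_inv (hS_pos hn y).ne').comp_hasFDerivAt y (hasFDerivAt_S y)

lemma hasFDerivAt_f' (hn : 0 < n) (y : Fin n → ℝ) :
    HasFDerivAt (f' (n := n)) (B y) y :=
  (hasFDerivAt_Sinv hn y).smul (hasFDerivAt_T y)

lemma B_apply (y u : Fin n → ℝ) :
    B y u u = (S y)⁻¹ * (∑ i, Real.exp (y i) * u i * u i)
      - (S y ^ 2)⁻¹ * (∑ i, Real.exp (y i) * u i) * (∑ i, Real.exp (y i) * u i) := by
  simp [B, T', T_apply, ContinuousLinearMap.sum_apply, Finset.mul_sum, mul_assoc]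
  ring

end Stmt6Aux

open Stmt6Aux in
/-- `lse` is 1-smooth in the `ℓ∞` norm: `0 ≤ uᵀ∇²lse(x)u ≤ ‖u‖∞²`.
(The norm on `Fin n → ℝ` is the sup norm.) -/
theorem stmt6 {n : ℕ} (x u : Fin n → ℝ) :
    0 ≤ iteratedFDeriv ℝ 2 (fun y : Fin n → ℝ => Real.log (∑ i, Real.exp (y i))) x ![u, u] ∧
    iteratedFDeriv ℝ 2 (fun y : Fin n → ℝ => Real.log (∑ i, Real.exp (y i))) x ![u, u]
      ≤ ‖u‖ ^ 2 := by
  rcases Nat.eq_zero_or_pos n with hn | hn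
  · subst hn
    have hconst : (fun y : Fin 0 → ℝ => Real.log (∑ i, Real.exp (y i)))
        = fun _ => Real.log 0 := by
      funext y; simp
    rw [hconst, iteratedFDeriv_const_of_ne two_ne_zero]
    constructor
    · simp
    · simp
  · have h1 : fderiv ℝ (fun y : Fin n → ℝ => Real.log (∑ i, Real.exp (y i))) = f' :=
      funext fun y => (hasFDerivAt_lse hn y).fderiv
    have hval : iteratedFDeriv ℝ 2 (fun y : Fin n → ℝ => Real.log (∑ i, Real.exp (y i)))
        x ![u, u] = B x u u := by
      rw [iteratedFDeriv_two_apply, h1, (hasFDerivAt_f' hn x).fderiv]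
      simp
    rw [hval, B_apply]
    set s := S x with hs
    have hspos : 0 < s := hS_pos hn x
    set A := ∑ i, Real.exp (x i) * u i * u i with hA
    set b := ∑ i, Real.exp (x i) * u i with hb
    -- Cauchy-Schwarz : b^2 ≤ s * A
    have hcs : b ^ 2 ≤ s * A := by
      have := Finset.sum_mul_sq_le_sq_mul_sq Finset.univ
        (fun i => Real.sqrt (Real.exp (x i))) (fun i => Real.sqrt (Real.exp (x i)) * u i)
      have e1 : ∀ i : Fin n, Real.sqrt (Real.exp (x i)) * (Real.sqrt (Real.exp (x i)) * u i)
          = Real.exp (x i) * u i := by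
        intro i
        rw [← mul_assoc, Real.mul_self_sqrt (Real.exp_pos _).le]
      have e2 : ∀ i : Fin n, Real.sqrt (Real.exp (x i)) ^ 2 = Real.exp (x i) := fun i =>
        Real.sq_sqrt (Real.exp_pos _).le
      have e3 : ∀ i : Fin n, (Real.sqrt (Real.exp (x i)) * u i) ^ 2
          = Real.exp (x i) * u i * u i := by
        intro i
        rw [mul_pow, e2]; ring
      calc b ^ 2 = (∑ i, Real.sqrt (Real.exp (x i)) * (Real.sqrt (Real.exp (x i)) * u i)) ^ 2 := by
            rw [hb]; congr 1; exact Finset.sum_congr rfl fun i _ => (e1 i).symm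
        _ ≤ (∑ i, Real.sqrt (Real.exp (x i)) ^ 2) * ∑ i, (Real.sqrt (Real.exp (x i)) * u i) ^ 2 :=
            this
        _ = s * A := by
            rw [hs, hA]
            congr 1
            · exact Finset.sum_congr rfl fun i _ => e2 i
            · exact Finset.sum_congr rfl fun i _ => e3 i
    have hAle : A ≤ s * ‖u‖ ^ 2 := by
      rw [hA, hs]
      unfold S
      rw [Finset.sum_mul]
      refine Finset.sum_le_sum fun i _ => ?_
      have h1 : u i * u i ≤ ‖u‖ ^ 2 := by
        have := norm_le_pi_norm u i
        have h2 : |u i| ≤ ‖u‖ := by simpa [Real.norm_eq_abs] using this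
        calc u i * u i = |u i| ^ 2 := by rw [sq_abs]; ring
          _ ≤ ‖u‖ ^ 2 := by
            exact pow_le_pow_left₀ (abs_nonneg _) h2 2
      calc Real.exp (x i) * u i * u i = Real.exp (x i) * (u i * u i) := by ring
        _ ≤ Real.exp (x i) * ‖u‖ ^ 2 := by
            exact mul_le_mul_of_nonneg_left h1 (Real.exp_pos _).le
    constructor
    · have : (s ^ 2)⁻¹ * b * b ≤ s⁻¹ * A := by
        have h := mul_le_mul_of_nonneg_left hcs (by positivity : (0:ℝ) ≤ (s ^ 2)⁻¹)
        calc (s ^ 2)⁻¹ * b * b = (s ^ 2)⁻¹ * b ^ 2 := by ring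
          _ ≤ (s ^ 2)⁻¹ * (s * A) := h
          _ = s⁻¹ * A := by field_simp
      linarith
    · have h1 : s⁻¹ * A ≤ ‖u‖ ^ 2 := by
        have := mul_le_mul_of_nonneg_left hAle (by positivity : (0:ℝ) ≤ s⁻¹)
        calc s⁻¹ * A ≤ s⁻¹ * (s * ‖u‖ ^ 2) := this
          _ = ‖u‖ ^ 2 := by field_simp
      nlinarith [sq_nonneg b, mul_pos hspos hspos, inv_pos.2 (pow_pos hspos 2)]
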